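/- For every r > 0 and every index i with 1 ≤ i ≤ n, the component φ_i is square-integrable on [r,∞), i.e. ∫_r^∞ φ_i(s)² ds < ∞; in fact ∫_r^∞ φ_i(s)² ds ≤ (α_r)_{i,i}. -/

import Mathlib

open MeasureTheory Filter Topology Matrix

section Aux
variable {n : ℕ} (f : ℝ → Fin n → ℝ)

/-- products of components are integrable on (0,t] -/
theorem aux_prod_int
    (hf_meas : ∀ i, Measurable fun s => f s i)
    (hf_loc : ∀ i, ∀ t > (0 : ℝ), IntegrableOn (fun s => (f s i) ^ 2) (Set.Ioc 0 t))
    (j k : Fin n) {t : ℝ} (ht : 0 < t) :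
    IntegrableOn (fun s => f s j * f s k) (Set.Ioc 0 t) := by
  have hg : IntegrableOn (fun s => ((f s j)^2 + (f s k)^2)/2) (Set.Ioc 0 t) :=
    ((hf_loc j t ht).add (hf_loc k t ht)).div_const 2
  have hmeas : AEStronglyMeasurable (fun s => f s j * f s k)
      (volume.restrict (Set.Ioc 0 t)) :=
    (((hf_meas j).mul (hf_meas k)).aestronglyMeasurable)
  refine hg.mono' hmeas (Eventually.of_forall fun s => ?_)
  have : ‖f s j * f s k‖ = |f s j| * |f s k| := by
    rw [norm_mul]; rfl
  rw [this]
  nlinarith [sq_nonneg (|f s j| - |f s k|), sq_abs (f s j), sq_abs (f s k)]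

end Aux

section Aux2
variable {n : ℕ} {f : ℝ → Fin n → ℝ}

theorem aux_quad {a b : ℝ}
    (hint : ∀ j k : Fin n, IntegrableOn (fun s => f s j * f s k) (Set.Ioc a b))
    (x : Fin n → ℝ) :
    x ⬝ᵥ (Matrix.of fun j k => ∫ u in Set.Ioc a b, f u j * f u k) *ᵥ x
      = ∫ u in Set.Ioc a b, (∑ j, x j * f u j)^2 := by
  have hpt : ∀ u, (∑ j, x j * f u j)^2
      = ∑ j, ∑ k, (x j * x k) * (f u j * f u k) := by
    intro u
    rw [sq, Finset.sum_mul_sum]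
    refine Finset.sum_congr rfl fun j _ => Finset.sum_congr rfl fun k _ => by ring
  rw [MeasureTheory.integral_congr_ae (Eventually.of_forall hpt)]
  rw [MeasureTheory.integral_finset_sum _ (fun j _ => by
    exact integrable_finset_sum _ (fun k _ => ((hint j k).const_mul _)))]
  simp only [dotProduct, Matrix.mulVec, Matrix.of_apply]
  refine Finset.sum_congr rfl fun j _ => ?_
  rw [MeasureTheory.integral_finset_sum _ (fun k _ => ((hint j k).const_mul _))]
  rw [Finset.mul_sum]
  refine Finset.sum_congr rfl fun k _ => ?_
  rw [integral_const_mul]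
  ring

end Aux2

/-- For every r > 0 and every index i, the component φ_i is square-integrable on [r,∞);
in fact ∫_r^∞ φ_i(s)² ds ≤ (α_r)_{i,i}. -/
theorem phi_square_integrable_away_from_zero
    (n : ℕ) (hn : 1 ≤ n)
    (f : ℝ → Fin n → ℝ)
    (hf_meas : ∀ i, Measurable fun s => f s i)
    (hf_loc : ∀ i, ∀ t > (0 : ℝ), IntegrableOn (fun s => (f s i) ^ 2) (Set.Ioc 0 t))
    (m : ℝ → Matrix (Fin n) (Fin n) ℝ)
    (hm : ∀ t, m t = Matrix.of fun i j => ∫ s in Set.Ioc 0 t, f s i * f s j)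
    (hm_inv : ∀ t > (0 : ℝ), IsUnit (m t))
    (α : ℝ → Matrix (Fin n) (Fin n) ℝ)
    (hα : ∀ t, α t = (m t)⁻¹)
    (φ : ℝ → Fin n → ℝ)
    (hφ : ∀ t, φ t = (α t).mulVec (f t)) :
    ∀ r > (0 : ℝ), ∀ i : Fin n,
      IntegrableOn (fun s => (φ s i) ^ 2) (Set.Ioi r) ∧
      (∫ s in Set.Ioi r, (φ s i) ^ 2) ≤ α r i i := by
  intro r hr i
  -- products integrable
  have hprod : ∀ (j k : Fin n) (a b : ℝ), 0 ≤ a →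
      IntegrableOn (fun s => f s j * f s k) (Set.Ioc a b) := by
    intro j k a b ha
    rcases lt_or_ge a b with h | h
    · exact (aux_prod_int f hf_meas hf_loc j k (lt_of_le_of_lt ha h)).mono_set
        (Set.Ioc_subset_Ioc_left ha)
    · rw [Set.Ioc_eq_empty (not_lt.mpr h)]; exact integrableOn_empty
  have hdet : ∀ t > (0:ℝ), IsUnit (m t).det := fun t ht =>
    (Matrix.isUnit_iff_isUnit_det _).mp (hm_inv t ht)
  have hmul1 : ∀ t > (0:ℝ), m t * α t = 1 := fun t ht => by
    rw [hα]; exact Matrix.mul_nonsing_inv _ (hdet t ht)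
  have hmul2 : ∀ t > (0:ℝ), α t * m t = 1 := fun t ht => by
    rw [hα]; exact Matrix.nonsing_inv_mul _ (hdet t ht)
  have hΔ : ∀ s t : ℝ, 0 < s → s ≤ t →
      m t - m s = Matrix.of fun j k => ∫ u in Set.Ioc s t, f u j * f u k := by
    intro s t hs hst
    ext j k
    simp only [hm, Matrix.sub_apply, Matrix.of_apply]
    have hu := MeasureTheory.setIntegral_union (f := fun u => f u j * f u k)
      (μ := volume) (Set.Ioc_disjoint_Ioc_of_le le_rfl) measurableSet_Ioc
      (hprod j k 0 s le_rfl) (hprod j k s t hs.le)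
    rw [Set.Ioc_union_Ioc_eq_Ioc hs.le hst] at hu
    linarith
  have hmsymm : ∀ t : ℝ, (m t)ᵀ = m t := by
    intro t; ext j k
    simp only [hm, Matrix.transpose_apply, Matrix.of_apply]
    simp_rw [mul_comm]
  have hαsymm : ∀ t > (0:ℝ), (α t)ᵀ = α t := by
    intro t ht; rw [hα, Matrix.transpose_nonsing_inv, hmsymm]
  have hkey : ∀ s t : ℝ, 0 < s → 0 < t →
      α s - α t = α s * (m t - m s) * α t := by
    intro s t hs ht
    have : α s * (m t - m s) * α t
        = α s * (m t * α t) - (α s * m s) * α t := by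
      rw [Matrix.mul_sub, Matrix.sub_mul, Matrix.mul_assoc]
    rw [this, hmul1 t ht, hmul2 s hs, mul_one, one_mul]
  -- PSD facts
  have hPSDm : ∀ t > (0:ℝ), ∀ v : Fin n → ℝ, 0 ≤ v ⬝ᵥ (m t) *ᵥ v := by
    intro t ht v
    rw [hm, aux_quad (fun j k => hprod j k 0 t le_rfl) v]
    exact MeasureTheory.setIntegral_nonneg measurableSet_Ioc fun u _ => sq_nonneg _
  have hPSDΔ : ∀ s t : ℝ, 0 < s → s ≤ t → ∀ v : Fin n → ℝ,
      0 ≤ v ⬝ᵥ (m t - m s) *ᵥ v := by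
    intro s t hs hst v
    rw [hΔ s t hs hst, aux_quad (fun j k => hprod j k s t hs.le) v]
    exact MeasureTheory.setIntegral_nonneg measurableSet_Ioc fun u _ => sq_nonneg _
  -- symmetric swap
  have hswap : ∀ (M : Matrix (Fin n) (Fin n) ℝ), Mᵀ = M →
      ∀ a b : Fin n → ℝ, a ⬝ᵥ M *ᵥ b = (M *ᵥ a) ⬝ᵥ b := by
    intro M hM a b
    rw [Matrix.dotProduct_mulVec, ← Matrix.mulVec_transpose, hM]
  -- monotonicity of quadratic form of α
  have hmono : ∀ (x : Fin n → ℝ) (s t : ℝ), 0 < s → s ≤ t →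
      x ⬝ᵥ (α t) *ᵥ x ≤ x ⬝ᵥ (α s) *ᵥ x := by
    intro x s t hs hst
    have ht : 0 < t := lt_of_lt_of_le hs hst
    set u := (α s) *ᵥ x with hu
    set v := (α t) *ᵥ x with hv
    have hxs : m s *ᵥ u = x := by
      rw [hu, Matrix.mulVec_mulVec, hmul1 s hs, Matrix.one_mulVec]
    have hxt : m t *ᵥ v = x := by
      rw [hv, Matrix.mulVec_mulVec, hmul1 t ht, Matrix.one_mulVec]
    have h1 : 0 ≤ (u - v) ⬝ᵥ (m s) *ᵥ (u - v) := hPSDm s hs _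
    have h2 : 0 ≤ v ⬝ᵥ (m t - m s) *ᵥ v := hPSDΔ s t hs hst v
    have e1 : (u - v) ⬝ᵥ (m s) *ᵥ (u - v)
        = u ⬝ᵥ x - x ⬝ᵥ v - v ⬝ᵥ x + v ⬝ᵥ (m s) *ᵥ v := by
      rw [Matrix.mulVec_sub, dotProduct_sub, sub_dotProduct,
        sub_dotProduct]
      have eus : u ⬝ᵥ (m s) *ᵥ u = u ⬝ᵥ x := by rw [hxs]
      have euv : u ⬝ᵥ (m s) *ᵥ v = x ⬝ᵥ v := by
        rw [hswap (m s) (hmsymm s) u v, hxs]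
      have evu : v ⬝ᵥ (m s) *ᵥ u = v ⬝ᵥ x := by rw [hxs]
      rw [eus, euv, evu]; ring
    have e2 : v ⬝ᵥ (m t - m s) *ᵥ v = v ⬝ᵥ x - v ⬝ᵥ (m s) *ᵥ v := by
      rw [Matrix.sub_mulVec, dotProduct_sub, hxt]
    have e3 : x ⬝ᵥ u = u ⬝ᵥ x := dotProduct_comm _ _
    have e4 : x ⬝ᵥ v = v ⬝ᵥ x := dotProduct_comm _ _
    rw [e1] at h1; rw [e2] at h2
    show x ⬝ᵥ v ≤ x ⬝ᵥ u
    linarith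
  -- indicator versions of the products
  set g : Fin n → Fin n → ℝ → ℝ :=
    fun j k => (Set.Ioi (0:ℝ)).indicator (fun s => f s j * f s k) with hgdef
  have hg_int : ∀ (j k : Fin n) (a b : ℝ), IntegrableOn (g j k) (Set.Ioc a b) := by
    intro j k a b
    rw [hgdef, IntegrableOn, MeasureTheory.integrable_indicator_iff measurableSet_Ioi,
      IntegrableOn, MeasureTheory.Measure.restrict_restrict measurableSet_Ioi]
    have hsub : Set.Ioi (0:ℝ) ∩ Set.Ioc a b ⊆ Set.Ioc 0 (max b 1) := by
      rintro x ⟨hx1, _, hx3⟩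
      exact ⟨hx1, le_max_of_le_left hx3⟩
    exact (hprod j k 0 (max b 1) le_rfl).mono_set hsub
  have hg_loc : ∀ j k : Fin n, LocallyIntegrable (g j k) volume := by
    intro j k
    rw [MeasureTheory.locallyIntegrable_iff]
    intro K hK
    obtain ⟨C, hC⟩ := hK.isBounded.subset_closedBall 0
    have : K ⊆ Set.Ioc (-C - 1) C := by
      intro x hx
      have := hC hx
      rw [Real.closedBall_eq_Icc] at this
      rcases this with ⟨h1, h2⟩
      constructor <;> [linarith; linarith]
    exact (hg_int j k _ _).mono_set this
  have hg_ii : ∀ (j k : Fin n) (a b : ℝ), IntervalIntegrable (g j k) volume a b := by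
    intro j k a b
    rw [intervalIntegrable_iff]
    exact hg_int j k _ _
  have hMcont : ∀ j k : Fin n, Continuous (fun t => ∫ x in (0:ℝ)..t, g j k x) :=
    fun j k => intervalIntegral.continuous_primitive (hg_ii j k) 0
  have hmeq : ∀ (j k : Fin n) (t : ℝ), 0 < t → m t j k = ∫ x in (0:ℝ)..t, g j k x := by
    intro j k t ht
    rw [intervalIntegral.integral_of_le ht.le, hm]
    show (∫ s in Set.Ioc 0 t, f s j * f s k) = _
    refine (MeasureTheory.setIntegral_congr_fun measurableSet_Ioc fun x hx => ?_).symm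
    exact Set.indicator_of_mem hx.1 _
  have hmcont : ∀ t : ℝ, 0 < t → ContinuousAt m t := by
    intro t ht
    apply continuousAt_pi.mpr; intro j; apply continuousAt_pi.mpr; intro k
    have heq : (fun t' => m t' j k) =ᶠ[𝓝 t] (fun t' => ∫ x in (0:ℝ)..t', g j k x) := by
      filter_upwards [isOpen_Ioi.mem_nhds ht] with s hs using hmeq j k s hs
    exact ContinuousAt.congr ((hMcont j k).continuousAt) heq.symm
  have hdet0 : ∀ t : ℝ, 0 < t → (m t).det ≠ 0 := fun t ht => (hdet t ht).ne_zero
  have hαfun : α = fun t' => ((m t').det)⁻¹ • (m t').adjugate := by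
    funext t'
    rw [hα, Matrix.inv_def, Ring.inverse_eq_inv']
  have hαcont : ∀ t : ℝ, 0 < t → ContinuousAt α t := by
    intro t ht
    rw [hαfun]
    have h1 : ContinuousAt (fun t' => (m t').det) t :=
      (continuous_id.matrix_det.continuousAt).comp (hmcont t ht)
    have h2 : ContinuousAt (fun t' => (m t').adjugate) t :=
      (continuous_id.matrix_adjugate.continuousAt).comp (hmcont t ht)
    exact (h1.inv₀ (hdet0 t ht)).smul h2
  -- step sequence
  set hh : ℕ → ℝ := fun N => 1/(N+1) with hhdef
  have hh_pos : ∀ N, 0 < hh N := fun N => by positivity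
  have hh_to : Tendsto hh atTop (𝓝 0) := tendsto_one_div_add_atTop_nhds_zero_nat
  -- Lebesgue points
  have hslope : ∀ j k : Fin n, ∀ᵐ t : ℝ, 0 < t →
      Tendsto (fun N => (hh N)⁻¹ * ((m (t + hh N) - m t) j k)) atTop
        (𝓝 (f t j * f t k)) := by
    intro j k
    filter_upwards [IsUnifLocDoublingMeasure.ae_tendsto_average (μ := volume)
      (hg_loc j k) 2] with t hL ht
    have hδ : Tendsto (fun N : ℕ => hh N / 2) atTop (𝓝[>] 0) := by
      rw [tendsto_nhdsWithin_iff]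
      exact ⟨by simpa using hh_to.div_const 2, Eventually.of_forall fun N => by
        simpa using half_pos (hh_pos N)⟩
    have hmem : ∀ᶠ N in atTop, t ∈ Metric.closedBall (t + hh N / 2) (2 * (hh N / 2)) := by
      refine Eventually.of_forall fun N => ?_
      rw [Metric.mem_closedBall, Real.dist_eq]
      have h0 := (hh_pos N).le
      rw [show t - (t + hh N / 2) = -(hh N / 2) by ring, abs_neg,
        abs_of_nonneg (by linarith)]
      linarith
    have hconv := hL (fun N => t + hh N / 2) (fun N => hh N / 2) hδ hmem
    have hgt : g j k t = f t j * f t k := Set.indicator_of_mem ht _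
    rw [hgt] at hconv
    refine hconv.congr fun N => ?_
    have hball : Metric.closedBall (t + hh N / 2) (hh N / 2) = Set.Icc t (t + hh N) := by
      rw [Real.closedBall_eq_Icc]
      congr 1 <;> ring
    rw [hball, MeasureTheory.setAverage_eq, Real.volume_real_Icc,
      show t + hh N - t = hh N by ring, max_eq_left (hh_pos N).le,
      MeasureTheory.integral_Icc_eq_integral_Ioc]
    have hieq : ∫ y in Set.Ioc t (t + hh N), g j k y
        = ∫ y in Set.Ioc t (t + hh N), f y j * f y k := by
      refine MeasureTheory.setIntegral_congr_fun measurableSet_Ioc fun x hx => ?_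
      exact Set.indicator_of_mem (lt_trans ht hx.1) _
    rw [hieq, smul_eq_mul]
    congr 1
    rw [hΔ t (t + hh N) ht (by linarith [(hh_pos N).le])]
    rfl
  set F : ℝ → ℝ := fun t => α t i i with hFdef
  have hGQ : ∀ t : ℝ, 0 < t →
      (α t * (Matrix.of fun j k => f t j * f t k) * α t) i i = (φ t i)^2 := by
    intro t ht
    have hs : ∀ a b, α t a b = α t b a := fun a b => by
      conv_lhs => rw [← hαsymm t ht]
      rfl
    rw [hφ]
    show (∑ k, (∑ j, α t i j * (f t j * f t k)) * α t k i)
      = ((α t *ᵥ f t) i)^2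
    simp only [Matrix.mulVec, dotProduct]
    rw [sq, Finset.sum_mul_sum]
    simp only [Finset.sum_mul]
    rw [Finset.sum_comm]
    refine Finset.sum_congr rfl fun j _ => Finset.sum_congr rfl fun k _ => ?_
    rw [hs k i]
    ring
  have hslope2 : ∀ᵐ t : ℝ, t ∈ Set.Ioi r →
      Tendsto (fun N => (F t - F (t + hh N)) / hh N) atTop (𝓝 ((φ t i)^2)) := by
    have hae : ∀ᵐ t : ℝ, ∀ j k : Fin n, 0 < t →
        Tendsto (fun N => (hh N)⁻¹ * ((m (t + hh N) - m t) j k)) atTop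
          (𝓝 (f t j * f t k)) :=
      (MeasureTheory.ae_all_iff).mpr fun j => (MeasureTheory.ae_all_iff).mpr fun k =>
        hslope j k
    filter_upwards [hae] with t hL htr
    have ht : 0 < t := lt_trans hr htr
    set Q : ℕ → Matrix (Fin n) (Fin n) ℝ :=
      fun N => (hh N)⁻¹ • (m (t + hh N) - m t) with hQdef
    have hQ : Tendsto Q atTop (𝓝 (Matrix.of fun j k => f t j * f t k)) := by
      apply tendsto_pi_nhds.mpr; intro j
      apply tendsto_pi_nhds.mpr; intro k
      simpa [hQdef, Matrix.smul_apply] using hL j k ht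
    have hB : Tendsto (fun N => α (t + hh N)) atTop (𝓝 (α t)) := by
      refine ((hαcont t ht).tendsto).comp ?_
      simpa using (tendsto_const_nhds (x := t)).add hh_to
    have hmulT : Tendsto (fun N => α t * Q N * α (t + hh N)) atTop
        (𝓝 (α t * (Matrix.of fun j k => f t j * f t k) * α t)) :=
      ((tendsto_const_nhds.mul hQ).mul hB)
    have hE : Tendsto (fun N => (α t * Q N * α (t + hh N)) i i) atTop
        (𝓝 ((α t * (Matrix.of fun j k => f t j * f t k) * α t) i i)) := by
      replace hmulT := tendsto_pi_nhds.mp hmulT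
      have h1 := hmulT i
      rw [tendsto_pi_nhds] at h1
      exact h1 i
    rw [hGQ t ht] at hE
    refine hE.congr fun N => ?_
    have hk := hkey t (t + hh N) ht (by linarith [hh_pos N])
    have h1 : F t - F (t + hh N) = (α t * (m (t + hh N) - m t) * α (t + hh N)) i i := by
      rw [hFdef, ← hk]
      rfl
    have h2 : α t * Q N * α (t + hh N)
        = (hh N)⁻¹ • (α t * (m (t + hh N) - m t) * α (t + hh N)) := by
      rw [hQdef, Matrix.mul_smul, Matrix.smul_mul]
    rw [h2, h1, Matrix.smul_apply, smul_eq_mul, div_eq_inv_mul]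
  -- continuity, sign, monotonicity of F
  have hFcont : ∀ t : ℝ, 0 < t → ContinuousAt F t := fun t ht =>
    ContinuousAt.comp (continuous_apply i).continuousAt
      (ContinuousAt.comp (continuous_apply i).continuousAt (hαcont t ht))
  have hentry : ∀ M : Matrix (Fin n) (Fin n) ℝ,
      (Pi.single i 1 : Fin n → ℝ) ⬝ᵥ M *ᵥ (Pi.single i 1) = M i i := by
    intro M
    rw [Matrix.mulVec_single, single_dotProduct]
    simp
  have hαPSD : ∀ t : ℝ, 0 < t → ∀ x : Fin n → ℝ, 0 ≤ x ⬝ᵥ (α t) *ᵥ x := by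
    intro t ht x
    have hx : m t *ᵥ ((α t) *ᵥ x) = x := by
      rw [Matrix.mulVec_mulVec, hmul1 t ht, Matrix.one_mulVec]
    have h0 := hPSDm t ht ((α t) *ᵥ x)
    rw [hx] at h0
    rwa [dotProduct_comm] at h0
  have hFnn : ∀ t : ℝ, 0 < t → 0 ≤ F t := by
    intro t ht
    have h0 := hαPSD t ht (Pi.single i 1)
    rwa [hentry] at h0
  have hFanti : ∀ s t : ℝ, 0 < s → s ≤ t → F t ≤ F s := by
    intro s t hs hst
    have h0 := hmono (Pi.single i 1) s t hs hst
    rwa [hentry, hentry] at h0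
  have hFii : ∀ a b : ℝ, r ≤ a → r ≤ b → IntervalIntegrable F volume a b := by
    intro a b ha hb
    apply ContinuousOn.intervalIntegrable
    intro x hx
    have hx0 : 0 < x := lt_of_lt_of_le hr (le_trans (le_min ha hb) hx.1)
    exact (hFcont x hx0).continuousWithinAt
  -- key integral bound
  have hbound : ∀ (N : ℕ) (b : ℝ), r ≤ b →
      ∫ s in r..b, (F s - F (s + hh N)) / hh N ≤ F r := by
    intro N b hb
    have hc0 : 0 < hh N := hh_pos N
    set c := hh N with hc
    have h1 : IntervalIntegrable F volume r b := hFii r b le_rfl hb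
    have h2 : IntervalIntegrable (fun s => F (s + c)) volume r b := by
      have h2' := (hFii (r + c) (b + c) (by linarith) (by linarith)).comp_add_right c
      simpa using h2'
    have h3 : (∫ s in r..b, (F s - F (s + c)) / c)
        = ((∫ s in r..b, F s) - ∫ s in r..b, F (s + c)) / c := by
      rw [intervalIntegral.integral_div, intervalIntegral.integral_sub h1 h2]
    have h4 : (∫ s in r..b, F (s + c)) = ∫ s in r + c..b + c, F s :=
      intervalIntegral.integral_comp_add_right F c
    have hA := intervalIntegral.integral_add_adjacent_intervals
      (hFii r (r + c) le_rfl (by linarith))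
      (hFii (r + c) (b + c) (by linarith) (by linarith))
    have hB := intervalIntegral.integral_add_adjacent_intervals h1
      (hFii b (b + c) hb (by linarith))
    have h5' : (∫ _ in r..r + c, F r) = c * F r := by
      rw [intervalIntegral.integral_const, smul_eq_mul]
      ring_nf
    have h5 : (∫ s in r..r + c, F s) ≤ c * F r := by
      rw [← h5']
      apply intervalIntegral.integral_mono_on (by linarith)
        (hFii r (r + c) le_rfl (by linarith)) intervalIntegrable_const
      intro x hx
      exact hFanti r x hr hx.1
    have h6 : 0 ≤ ∫ s in b..b + c, F s := by
      apply intervalIntegral.integral_nonneg (by linarith)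
      intro x hx
      exact hFnn x (lt_of_lt_of_le hr (le_trans hb hx.1))
    rw [h3, h4, div_le_iff₀ hc0]
    nlinarith [hA, hB, h5, h6]
  -- measurability of φ i ^ 2
  have hαm : ∀ j k : Fin n, AEMeasurable (fun s => α s j k)
      (volume.restrict (Set.Ioi (0:ℝ))) := by
    intro j k
    have hco : ContinuousOn (fun s => α s j k) (Set.Ioi (0:ℝ)) := by
      intro x hx
      exact (ContinuousAt.comp (continuous_apply k).continuousAt
        (ContinuousAt.comp (continuous_apply j).continuousAt (hαcont x hx))).continuousWithinAt
    exact hco.aemeasurable measurableSet_Ioi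
  have hφm0 : AEMeasurable (fun s => φ s i) (volume.restrict (Set.Ioi (0:ℝ))) := by
    have hrepr : (fun s => φ s i) = fun s => ∑ j, α s i j * f s j := by
      funext s
      rw [hφ]
      rfl
    rw [hrepr]
    exact Finset.aemeasurable_fun_sum _ fun j _ => (hαm i j).mul (hf_meas j).aemeasurable
  have hφm : AEMeasurable (fun s => (φ s i)^2) (volume.restrict (Set.Ioi (0:ℝ))) := by
    have : (fun s => (φ s i)^2) = fun s => φ s i * φ s i := by
      funext s
      ring
    rw [this]
    exact hφm0.mul hφm0
  have hφm' : AEMeasurable (fun s => (φ s i)^2) (volume.restrict (Set.Ioi r)) :=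
    hφm.mono_measure (Measure.restrict_mono (Set.Ioi_subset_Ioi hr.le) le_rfl)
  -- Fatou on each bounded piece
  have hlimb : ∀ b : ℝ, r ≤ b →
      ∫⁻ s in Set.Ioc r b, ENNReal.ofReal ((φ s i)^2) ≤ ENNReal.ofReal (F r) := by
    intro b hb
    set gN : ℕ → ℝ → ℝ := fun N s => (F s - F (s + hh N)) / hh N with hgNdef
    have hgint : ∀ N, IntegrableOn (gN N) (Set.Ioc r b) := by
      intro N
      have h1 : IntegrableOn F (Set.Ioc r b) := by
        have := (hFii r b le_rfl hb)
        rwa [intervalIntegrable_iff, Set.uIoc_of_le hb] at this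
      have h2 : IntegrableOn (fun s => F (s + hh N)) (Set.Ioc r b) := by
        have h2' := (hFii (r + hh N) (b + hh N) (by linarith [hh_pos N])
          (by linarith [hh_pos N])).comp_add_right (hh N)
        rw [intervalIntegrable_iff] at h2'
        simpa [Set.uIoc_of_le hb] using h2'
      exact (h1.sub h2).div_const _
    have hgnn : ∀ N, 0 ≤ᶠ[ae (volume.restrict (Set.Ioc r b))] gN N := by
      intro N
      rw [Filter.EventuallyLE, ae_restrict_iff' measurableSet_Ioc]
      refine Eventually.of_forall fun s hs => ?_
      have h0 : 0 < s := lt_trans hr hs.1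
      have hmono' := hFanti s (s + hh N) h0 (by linarith [hh_pos N])
      exact div_nonneg (by linarith) (hh_pos N).le
    have hint_le : ∀ N, ∫⁻ s in Set.Ioc r b, ENNReal.ofReal (gN N s)
        ≤ ENNReal.ofReal (F r) := by
      intro N
      rw [← MeasureTheory.ofReal_integral_eq_lintegral_ofReal (hgint N) (hgnn N)]
      apply ENNReal.ofReal_le_ofReal
      rw [← intervalIntegral.integral_of_le hb]
      exact hbound N b hb
    have hae2 : ∀ᵐ s ∂(volume.restrict (Set.Ioc r b)),
        ENNReal.ofReal ((φ s i)^2) = liminf (fun N => ENNReal.ofReal (gN N s)) atTop := by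
      filter_upwards [ae_restrict_of_ae hslope2,
        ae_restrict_mem measurableSet_Ioc] with s hs hmem
      have htt := hs hmem.1
      have hconv : Tendsto (fun N => ENNReal.ofReal (gN N s)) atTop
          (𝓝 (ENNReal.ofReal ((φ s i)^2))) :=
        (ENNReal.continuous_ofReal.continuousAt.tendsto).comp htt
      exact hconv.liminf_eq.symm
    calc ∫⁻ s in Set.Ioc r b, ENNReal.ofReal ((φ s i)^2)
        = ∫⁻ s in Set.Ioc r b, liminf (fun N => ENNReal.ofReal (gN N s)) atTop :=
          lintegral_congr_ae hae2
      _ ≤ liminf (fun N => ∫⁻ s in Set.Ioc r b, ENNReal.ofReal (gN N s)) atTop :=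
          MeasureTheory.lintegral_liminf_le' fun N =>
            ENNReal.measurable_ofReal.comp_aemeasurable (hgint N).aemeasurable
      _ ≤ ENNReal.ofReal (F r) :=
          (Filter.liminf_le_liminf (Eventually.of_forall hint_le)).trans_eq
            (Filter.liminf_const _)
  -- put the pieces together over Ioi r
  have hmain : ∫⁻ s in Set.Ioi r, ENNReal.ofReal ((φ s i)^2) ≤ ENNReal.ofReal (F r) := by
    set G0 : ℝ → ENNReal := fun s => ENNReal.ofReal ((φ s i)^2) with hG0def
    have hgaem : AEMeasurable G0 (volume.restrict (Set.Ioi r)) :=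
      ENNReal.measurable_ofReal.comp_aemeasurable hφm'
    have hseq : ((Set.Ioi r).indicator G0)
        = fun s => ⨆ M : ℕ, (Set.Ioc r (r + M + 1)).indicator G0 s := by
      funext s
      by_cases hs : s ∈ Set.Ioi r
      · rw [Set.indicator_of_mem hs]
        refine le_antisymm ?_ (iSup_le fun M => Set.indicator_le_self _ _ s)
        obtain ⟨M, hM⟩ := exists_nat_gt (s - r)
        refine le_iSup_of_le M ?_
        have hmem2 : s ∈ Set.Ioc r (r + M + 1) := ⟨hs, by push_cast; linarith⟩
        rw [Set.indicator_of_mem hmem2]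
      · rw [Set.indicator_of_notMem hs]
        have hz : ∀ M : ℕ, (Set.Ioc r (r + M + 1)).indicator G0 s = 0 :=
          fun M => Set.indicator_of_notMem (fun hc => hs hc.1) _
        simp [hz]
    rw [← lintegral_indicator measurableSet_Ioi G0, hseq,
      lintegral_iSup' (fun M => (aemeasurable_indicator_iff measurableSet_Ioc).mpr
        (hgaem.mono_measure (Measure.restrict_mono Set.Ioc_subset_Ioi_self le_rfl)))
      (Eventually.of_forall fun x => fun M M' hMM' =>
        Set.indicator_le_indicator_of_subset
          (Set.Ioc_subset_Ioc le_rfl (by push_cast; linarith [(Nat.cast_le (α := ℝ)).mpr hMM'])) (fun a => zero_le) x)]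
    refine iSup_le fun M => ?_
    rw [lintegral_indicator measurableSet_Ioc]
    exact hlimb (r + M + 1) (by linarith [Nat.cast_nonneg (α := ℝ) M])
  have hne : ENNReal.ofReal (F r) ≠ ⊤ := ENNReal.ofReal_ne_top
  constructor
  · refine ⟨hφm'.aestronglyMeasurable, ?_⟩
    rw [HasFiniteIntegral]
    have heq : ∀ s : ℝ, ‖(φ s i)^2‖ₑ = ENNReal.ofReal ((φ s i)^2) :=
      fun s => (Real.enorm_eq_ofReal (sq_nonneg _))
    calc ∫⁻ s in Set.Ioi r, ‖(φ s i)^2‖ₑ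
        = ∫⁻ s in Set.Ioi r, ENNReal.ofReal ((φ s i)^2) := by
          simp_rw [heq]
      _ ≤ ENNReal.ofReal (F r) := hmain
      _ < ⊤ := ENNReal.ofReal_lt_top
  · have hcalc : ∫ s in Set.Ioi r, (φ s i)^2
        = (∫⁻ s in Set.Ioi r, ENNReal.ofReal ((φ s i)^2)).toReal :=
      MeasureTheory.integral_eq_lintegral_of_nonneg_ae
        (Eventually.of_forall fun s => sq_nonneg _) hφm'.aestronglyMeasurable
    rw [hcalc]
    calc (∫⁻ s in Set.Ioi r, ENNReal.ofReal ((φ s i)^2)).toReal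
        ≤ (ENNReal.ofReal (F r)).toReal := ENNReal.toReal_mono hne hmain
      _ = F r := ENNReal.toReal_ofReal (hFnn r hr)
      _ = α r i i := rfl
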